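/- For a convex TU-game, the Vickrey payment vector (vp_i)_{i∈N} with vp_i = v(N) − v(N∖{i}) satisfies coalitional rationality: ∑_{i∈S} vp_i ≥ v(S) for every coalition S ⊆ N. -/

import Mathlib

open Finset

/-- The core of the TU-game `(Fin n, v)`. -/
def core (n : ℕ) (v : Finset (Fin n) → ℝ) : Set (Fin n → ℝ) :=
  {x | ∑ i, x i = v Finset.univ ∧ ∀ S : Finset (Fin n), v S ≤ ∑ i ∈ S, x i}

/-- Convexity (supermodularity) of a TU-game. -/
def ConvexGame (n : ℕ) (v : Finset (Fin n) → ℝ) : Prop :=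
  ∀ S T : Finset (Fin n), v S + v T ≤ v (S ∪ T) + v (S ∩ T)

/-- The Vickrey payment of player `i`. -/
def vickrey (n : ℕ) (v : Finset (Fin n) → ℝ) (i : Fin n) : ℝ :=
  v Finset.univ - v (Finset.univ.erase i)

/-- For a convex game the Vickrey payment vector satisfies coalitional rationality. -/
theorem vickrey_coalitionally_rational (n : ℕ) (v : Finset (Fin n) → ℝ) (hv0 : v ∅ = 0)
    (hconv : ConvexGame n v) :
    ∀ S : Finset (Fin n), v S ≤ ∑ i ∈ S, vickrey n v i := by
  intro S
  induction S using Finset.induction_on with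
  | empty => simp [hv0]
  | insert _ _ hi =>
    rename_i i S hS
    rw [Finset.sum_insert hi]
    have key : v (insert i S) - v S ≤ vickrey n v i := by
      have h := hconv (Finset.univ.erase i) (insert i S)
      have hu : (Finset.univ.erase i) ∪ insert i S = Finset.univ := by
        ext x; by_cases hx : x = i <;> simp [hx]
      have hin : (Finset.univ.erase i) ∩ insert i S = S := by
        ext x
        by_cases hx : x = i
        · simp [hx, hi]
        · simp [hx]
      rw [hu, hin] at h
      unfold vickrey; linarith
    linarith
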